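/- arXiv:1602.02987 — 2 statements merged into one kernel-verified Lean document; each statement's English description precedes it below -/
import Mathlib

section
/- Let v ∈ V and {u,w} ∈ E with v ∉ {u,w}, v not adjacent to u and v not adjacent to w in Γ. Then the inequality x_v + (1/2)x_u + (1/2)x_w − 2·Σ_{i ∈ V∖{u,v,w}} x_i ≤ 1 is valid on P(Γ) and its set of maximizers on P(Γ) is the segment [χ({v}), χ({u,w})], so these two vertices are adjacent. -/
open Set

noncomputable section

variable {V : Type*}

/-- Characteristic vector of a set of nodes. -/
def chi (S : Set V) : V → ℝ := S.indicator (fun _ => (1 : ℝ))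

/-- The candidate vertex set of the polytope `P(Γ)`. -/
def polyVerts (G : SimpleGraph V) : Set (V → ℝ) :=
  {x | x = chi (∅ : Set V) ∨ (∃ v : V, x = chi {v}) ∨
        (∃ u w : V, G.Adj u w ∧ x = chi {u, w})}

/-- The polytope `P(Γ)`. -/
def poly (G : SimpleGraph V) : Set (V → ℝ) := convexHull ℝ (polyVerts G)

/-- Two points are adjacent vertices of a convex set `P` when the segment
joining them is a (1-dimensional) face, i.e. an extreme subset of `P`. -/
def AdjVert (P : Set (V → ℝ)) (p q : V → ℝ) : Prop :=
  p ≠ q ∧ IsExtreme ℝ P (segment ℝ p q)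

/-- A combinatorial automorphism of `P`: a bijection of the vertex (extreme point)
set of `P` mapping the vertex set of each face onto the vertex set of some face. -/
def IsCombAut (P : Set (V → ℝ)) (σ : (V → ℝ) → (V → ℝ)) : Prop :=
  Set.BijOn σ (P.extremePoints ℝ) (P.extremePoints ℝ) ∧
  ∀ F : Set (V → ℝ), IsExtreme ℝ P F →
    ∃ F' : Set (V → ℝ), IsExtreme ℝ P F' ∧
      σ '' (F ∩ P.extremePoints ℝ) = F' ∩ P.extremePoints ℝ

/-- An automorphism of the skeleton of `P`: a bijection of the vertex set of `P`
preserving adjacency (in both directions). -/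
def IsSkelAut (P : Set (V → ℝ)) (σ : (V → ℝ) → (V → ℝ)) : Prop :=
  Set.BijOn σ (P.extremePoints ℝ) (P.extremePoints ℝ) ∧
  ∀ p ∈ P.extremePoints ℝ, ∀ q ∈ P.extremePoints ℝ,
    (AdjVert P p q ↔ AdjVert P (σ p) (σ q))

section Aux

variable [Fintype V] [DecidableEq V]

/-- Coefficient vector of the valid inequality. -/
def coefA (v u w : V) : V → ℝ :=
  fun i => if i = v then 1 else if i = u ∨ i = w then 1/2 else -2

/-- The linear functional of the valid inequality. -/
def LfMap (v u w : V) : (V → ℝ) →ₗ[ℝ] ℝ where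
  toFun x := ∑ i, coefA v u w i * x i
  map_add' x y := by simp [mul_add, Finset.sum_add_distrib]
  map_smul' c x := by
    simp only [smul_eq_mul, RingHom.id_apply, Finset.mul_sum, Pi.smul_apply]
    exact Finset.sum_congr rfl fun i _ => by ring

lemma coefA_le_one (v u w a : V) : coefA v u w a ≤ 1 := by
  unfold coefA; split_ifs <;> norm_num

lemma chi_apply (S : Set V) [DecidablePred (· ∈ S)] (i : V) :
    chi S i = if i ∈ S then 1 else 0 := by
  simp [chi, Set.indicator_apply]

lemma Lf_eq_lhs (v u w : V) (hvu : v ≠ u) (hvw : v ≠ w) (huw : u ≠ w) (x : V → ℝ) :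
    x v + (1 / 2) * x u + (1 / 2) * x w
          - 2 * ∑ i ∈ Finset.univ \ {u, v, w}, x i = LfMap v u w x := by
  have hsub : ({u, v, w} : Finset V) ⊆ Finset.univ := Finset.subset_univ _
  have hsplit := Finset.sum_sdiff (f := fun i => coefA v u w i * x i) hsub
  have h1 : ∀ i ∈ Finset.univ \ ({u, v, w} : Finset V),
      coefA v u w i * x i = -2 * x i := by
    intro i hi
    simp only [Finset.mem_sdiff, Finset.mem_insert, Finset.mem_singleton] at hi
    push_neg at hi
    obtain ⟨-, hiu, hiv, hiw⟩ := hi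
    simp [coefA, hiu, hiv, hiw]
  have h2 : ∑ i ∈ ({u, v, w} : Finset V), coefA v u w i * x i
      = (1/2) * x u + x v + (1/2) * x w := by
    rw [Finset.sum_insert (by simp [hvu.symm, huw]), Finset.sum_insert (by simp [hvw]),
      Finset.sum_singleton]
    simp [coefA, hvu.symm, hvw.symm, huw, huw.symm]
    ring
  have h3 : ∑ i ∈ Finset.univ \ ({u, v, w} : Finset V), coefA v u w i * x i
      = -2 * ∑ i ∈ Finset.univ \ ({u, v, w} : Finset V), x i := by
    rw [Finset.sum_congr rfl h1, Finset.mul_sum]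
  have : (LfMap v u w x : ℝ) = ∑ i, coefA v u w i * x i := rfl
  rw [this, ← hsplit, h2, h3]
  ring

lemma Lf_chi_single (v u w a : V) : LfMap v u w (chi {a}) = coefA v u w a := by
  have : (LfMap v u w (chi {a}) : ℝ) = ∑ i, coefA v u w i * chi {a} i := rfl
  rw [this]
  rw [Finset.sum_eq_single a]
  · simp [chi_apply]
  · intro b _ hb; simp [chi_apply, hb]
  · simp

lemma chi_pair (a b : V) (hab : a ≠ b) :
    chi ({a, b} : Set V) = chi {a} + chi {b} := by
  funext i
  by_cases h1 : i = a <;> by_cases h2 : i = b <;>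
    simp_all [chi_apply, Pi.add_apply]

lemma Lf_chi_pair (v u w a b : V) (hab : a ≠ b) :
    LfMap v u w (chi ({a, b} : Set V)) = coefA v u w a + coefA v u w b := by
  rw [chi_pair a b hab, map_add, Lf_chi_single, Lf_chi_single]

lemma Lf_chi_empty (v u w : V) : LfMap v u w (chi (∅ : Set V)) = 0 := by
  have : chi (∅ : Set V) = 0 := by funext i; simp [chi]
  rw [this, map_zero]

end Aux

section Main

variable [Fintype V] [DecidableEq V] {G : SimpleGraph V} {v u w : V}

lemma coefA_pair_bound (huw : G.Adj u w) (hvu : v ≠ u) (hvw : v ≠ w)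
    (h1 : ¬ G.Adj v u) (h2 : ¬ G.Adj v w) {a b : V} (hab : G.Adj a b) :
    coefA v u w a + coefA v u w b ≤ 1 ∧
      (coefA v u w a + coefA v u w b = 1 → ({a, b} : Set V) = {u, w}) := by
  have hab' : a ≠ b := hab.ne
  have hcase : ∀ c d : V, G.Adj c d →
      (coefA v u w c = 1 ∧ coefA v u w d = -2) ∨
      (coefA v u w c = 1/2 ∧ (coefA v u w d = 1/2 ∨ coefA v u w d = -2) ∧
        (c = u ∨ c = w)) ∨
      coefA v u w c = -2 := by
    intro c d hcd
    by_cases hc : c = v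
    · have hdu : d ≠ u := fun h => h1 (by rw [← hc, ← h]; exact hcd)
      have hdw : d ≠ w := fun h => h2 (by rw [← hc, ← h]; exact hcd)
      have hdv : d ≠ v := fun h => hcd.ne' (h.trans hc.symm)
      left
      constructor
      · simp [coefA, hc]
      · simp [coefA, hdu, hdv, hdw]
    · by_cases hc2 : c = u ∨ c = w
      · right; left
        refine ⟨by simp [coefA, hc, hc2], ?_, hc2⟩
        have hdv : d ≠ v := by
          rintro rfl
          rcases hc2 with rfl | rfl
          · exact h1 hcd.symm
          · exact h2 hcd.symm
        by_cases hd2 : d = u ∨ d = w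
        · left; simp [coefA, hdv, hd2]
        · right; simp [coefA, hdv, hd2]
      · right; right; simp [coefA, hc, hc2]
  constructor
  · rcases hcase a b hab with ⟨e1, e2⟩ | ⟨e1, e2 | e2, _⟩ | e1
    · rw [e1, e2]; norm_num
    · rw [e1, e2]; norm_num
    · rw [e1, e2]; norm_num
    · rw [e1]; have := coefA_le_one v u w b; linarith
  · intro heq
    rcases hcase a b hab with ⟨e1, e2⟩ | ⟨e1, e2, hcu⟩ | e1
    · rw [e1, e2] at heq; norm_num at heq
    · rcases e2 with e2 | e2
      · -- both 1/2, so a,b ∈ {u,w}, a ≠ b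
        have hb2 : b = u ∨ b = w := by
          by_contra hb
          have hbv : b ≠ v := by
            rintro rfl
            rcases hcu with rfl | rfl
            · exact h1 hab.symm
            · exact h2 hab.symm
          simp [coefA, hbv, hb] at e2
          norm_num at e2
        rcases hcu with rfl | rfl <;> rcases hb2 with rfl | rfl
        · exact absurd rfl hab'
        · rfl
        · exact Set.pair_comm _ _
        · exact absurd rfl hab'
      · rw [e1, e2] at heq; norm_num at heq
    · rw [e1] at heq
      have := coefA_le_one v u w b
      linarith

lemma Lf_le_on_verts (huw : G.Adj u w) (hvu : v ≠ u) (hvw : v ≠ w)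
    (h1 : ¬ G.Adj v u) (h2 : ¬ G.Adj v w) :
    ∀ x ∈ polyVerts G, LfMap v u w x ≤ 1 := by
  rintro x (rfl | ⟨a, rfl⟩ | ⟨a, b, hab, rfl⟩)
  · rw [Lf_chi_empty]; norm_num
  · rw [Lf_chi_single]; exact coefA_le_one v u w a
  · rw [Lf_chi_pair v u w a b hab.ne]
    exact (coefA_pair_bound huw hvu hvw h1 h2 hab).1

lemma Lf_eq_one_on_verts (huw : G.Adj u w) (hvu : v ≠ u) (hvw : v ≠ w)
    (h1 : ¬ G.Adj v u) (h2 : ¬ G.Adj v w) :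
    ∀ x ∈ polyVerts G, LfMap v u w x = 1 →
      x = chi ({v} : Set V) ∨ x = chi ({u, w} : Set V) := by
  rintro x (rfl | ⟨a, rfl⟩ | ⟨a, b, hab, rfl⟩) hx
  · rw [Lf_chi_empty] at hx; norm_num at hx
  · left
    rw [Lf_chi_single] at hx
    have ha : a = v := by
      by_contra h
      simp only [coefA, h, if_false] at hx
      split_ifs at hx <;> norm_num at hx
    rw [ha]
  · right
    rw [Lf_chi_pair v u w a b hab.ne] at hx
    have := (coefA_pair_bound huw hvu hvw h1 h2 hab).2 hx
    rw [this]

lemma chi_v_mem (G : SimpleGraph V) (v : V) : chi ({v} : Set V) ∈ polyVerts G :=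
  Or.inr (Or.inl ⟨v, rfl⟩)

lemma chi_uw_mem (huw : G.Adj u w) : chi ({u, w} : Set V) ∈ polyVerts G :=
  Or.inr (Or.inr ⟨u, w, huw, rfl⟩)

lemma Lf_chi_v (hvu : v ≠ u) (hvw : v ≠ w) : LfMap v u w (chi ({v} : Set V)) = 1 := by
  rw [Lf_chi_single]; simp [coefA]

lemma Lf_chi_uw (hvu : v ≠ u) (hvw : v ≠ w) (huw : u ≠ w) :
    LfMap v u w (chi ({u, w} : Set V)) = 1 := by
  rw [Lf_chi_pair v u w u w huw]
  simp [coefA, hvu.symm, hvw.symm]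
  norm_num

lemma Lf_le_on_poly (huw : G.Adj u w) (hvu : v ≠ u) (hvw : v ≠ w)
    (h1 : ¬ G.Adj v u) (h2 : ¬ G.Adj v w) :
    ∀ x ∈ poly G, LfMap v u w x ≤ 1 := by
  intro x hx
  have hconv : Convex ℝ {y : V → ℝ | LfMap v u w y ≤ 1} :=
    convex_halfSpace_le (LfMap v u w).isLinear 1
  exact convexHull_min (Lf_le_on_verts huw hvu hvw h1 h2) hconv hx

lemma face_eq_segment (huw : G.Adj u w) (hvu : v ≠ u) (hvw : v ≠ w)
    (h1 : ¬ G.Adj v u) (h2 : ¬ G.Adj v w) :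
    {x ∈ poly G | LfMap v u w x = 1} =
      segment ℝ (chi ({v} : Set V)) (chi ({u, w} : Set V)) := by
  apply Set.Subset.antisymm
  · rintro x ⟨hx, hx1⟩
    rw [poly, convexHull_eq] at hx
    obtain ⟨ι, t, wt, z, hw0, hw1, hz, hcm⟩ := hx
    rw [← convexHull_pair]
    have hLz : ∀ i ∈ t, LfMap v u w (z i) ≤ 1 := fun i hi =>
      Lf_le_on_verts huw hvu hvw h1 h2 _ (hz i hi)
    have hLx : ∑ i ∈ t, wt i * LfMap v u w (z i) = 1 := by
      rw [← hx1, ← hcm, Finset.centerMass_eq_of_sum_1 _ _ hw1, map_sum]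
      simp [map_smul, smul_eq_mul]
    have hkey : ∀ i ∈ t, wt i ≠ 0 → LfMap v u w (z i) = 1 := by
      intro i hi hwi
      by_contra hne
      have hwi' : 0 < wt i := lt_of_le_of_ne (hw0 i hi) (Ne.symm hwi)
      have hlt : wt i * LfMap v u w (z i) < wt i * 1 :=
        mul_lt_mul_of_pos_left (lt_of_le_of_ne (hLz i hi) hne) hwi'
      have : ∑ j ∈ t, wt j * LfMap v u w (z j) < ∑ j ∈ t, wt j * 1 := by
        apply Finset.sum_lt_sum
        · intro j hj
          exact mul_le_mul_of_nonneg_left (hLz j hj) (hw0 j hj)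
        · exact ⟨i, hi, hlt⟩
      simp only [mul_one, hw1] at this
      rw [hLx] at this
      exact lt_irrefl _ this
    rw [← hcm, ← Finset.centerMass_filter_ne_zero z]
    apply Finset.centerMass_mem_convexHull
    · intro i hi; exact hw0 i (Finset.mem_filter.mp hi).1
    · rw [Finset.sum_filter_ne_zero, hw1]; norm_num
    · intro i hi
      obtain ⟨hit, hwi⟩ := Finset.mem_filter.mp hi
      rcases Lf_eq_one_on_verts huw hvu hvw h1 h2 _ (hz i hit) (hkey i hit hwi) with h | h <;>
        simp [h]
  · intro x hx
    rw [← convexHull_pair] at hx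
    have hsub : ({chi ({v} : Set V), chi ({u, w} : Set V)} : Set (V → ℝ)) ⊆
        {x ∈ poly G | LfMap v u w x = 1} := by
      rintro y (rfl | rfl)
      · exact ⟨subset_convexHull ℝ _ (chi_v_mem G v), Lf_chi_v hvu hvw⟩
      · exact ⟨subset_convexHull ℝ _ (chi_uw_mem huw), Lf_chi_uw hvu hvw huw.ne⟩
    have hconv : Convex ℝ {x ∈ poly G | LfMap v u w x = 1} := by
      have h1c : Convex ℝ (poly G) := convex_convexHull ℝ _
      have h2c : Convex ℝ {y : V → ℝ | LfMap v u w y = 1} :=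
        convex_hyperplane (LfMap v u w).isLinear 1
      exact h1c.inter h2c
    exact convexHull_min hsub hconv hx

end Main

theorem stmt4 [Fintype V] [DecidableEq V] (G : SimpleGraph V) {v u w : V}
    (huw : G.Adj u w) (hvu : v ≠ u) (hvw : v ≠ w)
    (h1 : ¬ G.Adj v u) (h2 : ¬ G.Adj v w) :
    (∀ x ∈ poly G,
        x v + (1 / 2) * x u + (1 / 2) * x w
          - 2 * ∑ i ∈ Finset.univ \ {u, v, w}, x i ≤ 1) ∧
    {x ∈ poly G |
        x v + (1 / 2) * x u + (1 / 2) * x w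
          - 2 * ∑ i ∈ Finset.univ \ {u, v, w}, x i = 1} =
      segment ℝ (chi ({v} : Set V)) (chi ({u, w} : Set V)) ∧
    AdjVert (poly G) (chi ({v} : Set V)) (chi ({u, w} : Set V)) := by
  have hrw : ∀ x : V → ℝ, x v + (1 / 2) * x u + (1 / 2) * x w
          - 2 * ∑ i ∈ Finset.univ \ {u, v, w}, x i = LfMap v u w x := by
    intro x
    have := Lf_eq_lhs v u w hvu hvw huw.ne x
    linarith [this]
  have hface := face_eq_segment huw hvu hvw h1 h2
  refine ⟨?_, ?_, ?_⟩
  · intro x hx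
    rw [hrw x]
    exact Lf_le_on_poly huw hvu hvw h1 h2 x hx
  · rw [← hface]
    ext x
    simp only [Set.mem_setOf_eq, hrw x]
  · constructor
    · intro h
      have h1' : chi ({v} : Set V) v = 1 := by simp [chi_apply]
      have h2' : chi ({u, w} : Set V) v = 0 := by
        simp [chi_apply, hvu, hvw]
      rw [h] at h1'
      rw [h1'] at h2'
      norm_num at h2'
    · constructor
      · rw [← hface]; exact fun x hx => hx.1
      · intro x1 hx1 x2 hx2 x hx hxseg
        rw [← hface] at hx
        obtain ⟨hxp, hxf⟩ := hx
        obtain ⟨a, b, ha, hb, hab, hx'⟩ := hxseg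
        have hl1 : LfMap v u w x1 ≤ 1 := Lf_le_on_poly huw hvu hvw h1 h2 x1 hx1
        have hl2 : LfMap v u w x2 ≤ 1 := Lf_le_on_poly huw hvu hvw h1 h2 x2 hx2
        have hsum : a * LfMap v u w x1 + b * LfMap v u w x2 = 1 := by
          rw [← hxf, ← hx']
          simp [map_add, map_smul, smul_eq_mul]
        have he1 : LfMap v u w x1 = 1 := by nlinarith
        have he2 : LfMap v u w x2 = 1 := by nlinarith
        rw [← hface]; exact ⟨hx1, he1⟩
end
end

section
/- The neighborhood of χ(∅) in the skeleton of P(Γ) is exactly {χ({u}) : u ∈ V}, and the map u ↦ χ({u}) is a graph isomorphism from the complement graph of Γ to the subgraph induced by the skeleton on this neighborhood. -/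
open Set

noncomputable section

variable {V : Type*}

-- auxiliary
lemma chi_empty : chi (∅ : Set V) = 0 := by
  funext w; simp [chi]

lemma chi_single_self (u : V) : chi ({u} : Set V) u = 1 := by
  simp [chi]

lemma chi_single_ne {u w : V} (h : w ≠ u) : chi ({u} : Set V) w = 0 :=
  Set.indicator_of_notMem (by simpa using h) _

lemma chi_pair_eq {u v : V} (h : u ≠ v) :
    chi ({u, v} : Set V) = chi {u} + chi {v} := by
  funext w
  by_cases hu : w = u
  · subst hu
    rw [Pi.add_apply, chi_single_self, chi_single_ne h,
      show chi ({w, v} : Set V) w = 1 from Set.indicator_of_mem (by left; rfl) _]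
    ring
  · by_cases hv : w = v
    · subst hv
      rw [Pi.add_apply, chi_single_self, chi_single_ne hu,
        show chi ({u, w} : Set V) w = 1 from Set.indicator_of_mem (by right; rfl) _]
      ring
    · rw [Pi.add_apply, chi_single_ne hu, chi_single_ne hv,
        show chi ({u, v} : Set V) w = 0 from
          Set.indicator_of_notMem (by simp [hu, hv]) _]
      ring

lemma chi_inj : Function.Injective (fun u : V => chi ({u} : Set V)) := by
  intro u v h
  by_contra hne
  have : chi ({u} : Set V) u = chi ({v} : Set V) u := congrFun h u
  rw [chi_single_self, chi_single_ne hne] at this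
  norm_num at this

/-- linear functional from coefficients -/
def lfun [Fintype V] (c : V → ℝ) : (V → ℝ) →ₗ[ℝ] ℝ where
  toFun x := ∑ w, c w * x w
  map_add' x y := by simp [mul_add, Finset.sum_add_distrib]
  map_smul' r x := by
    simp only [Pi.smul_apply, smul_eq_mul, RingHom.id_apply, Finset.mul_sum]
    exact Finset.sum_congr rfl fun w _ => by ring

lemma lfun_chi_single [Fintype V] (c : V → ℝ) (u : V) :
    lfun c (chi ({u} : Set V)) = c u := by
  simp only [lfun, LinearMap.coe_mk, AddHom.coe_mk]
  rw [Finset.sum_eq_single u]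
  · rw [chi_single_self]; ring
  · intro b _ hb; rw [chi_single_ne hb]; ring
  · intro h; exact absurd (Finset.mem_univ u) h

lemma lfun_zero_apply [Fintype V] (c : V → ℝ) : lfun c (0 : V → ℝ) = 0 := by
  simp [lfun]

/-- a linear upper bound on all candidate vertices holds on the polytope -/
lemma lfun_le_on_poly [Fintype V] (G : SimpleGraph V) (c : V → ℝ) (r : ℝ)
    (h0 : (0:ℝ) ≤ r) (h1 : ∀ v : V, c v ≤ r)
    (h2 : ∀ u w : V, G.Adj u w → c u + c w ≤ r) :
    ∀ x ∈ poly G, lfun c x ≤ r := by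
  have hconv : Convex ℝ {x : V → ℝ | lfun c x ≤ r} :=
    convex_halfSpace_le (lfun c).isLinear r
  have hsub : polyVerts G ⊆ {x : V → ℝ | lfun c x ≤ r} := by
    rintro x (rfl | ⟨v, rfl⟩ | ⟨a, b, hab, rfl⟩)
    · simp only [mem_setOf_eq, chi_empty, lfun_zero_apply]; exact h0
    · simpa [lfun_chi_single] using h1 v
    · have := h2 a b hab
      simp only [mem_setOf_eq, chi_pair_eq hab.ne, map_add, lfun_chi_single]
      exact this
  exact fun x hx => convexHull_min hsub hconv hx

/-- the set where a bounded linear functional attains its max is extreme -/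
lemma face_extreme {P : Set (V → ℝ)} (l : (V → ℝ) →ₗ[ℝ] ℝ) (r : ℝ)
    (h : ∀ x ∈ P, l x ≤ r) : IsExtreme ℝ P {x ∈ P | l x = r} := by
  constructor
  · exact fun x hx => hx.1
  · rintro x1 hx1 x2 hx2 x ⟨hxP, hxl⟩ ⟨a, b, ha, hb, hab, hx⟩
    have e1 : l x1 ≤ r := h x1 hx1
    have e2 : l x2 ≤ r := h x2 hx2
    have hl : a * l x1 + b * l x2 = r := by
      rw [← hxl, ← hx]; simp [smul_eq_mul]
    have hr : a * r + b * r = r := by rw [← add_mul, hab, one_mul]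
    have k1 : l x1 = r := by
      have h2' : b * l x2 ≤ b * r := mul_le_mul_of_nonneg_left e2 hb.le
      have h3' : a * r ≤ a * l x1 := by linarith
      have := le_of_mul_le_mul_left h3' ha
      linarith
    have k2 : l x2 = r := by
      have h2' : a * l x1 ≤ a * r := mul_le_mul_of_nonneg_left e1 ha.le
      have h3' : b * r ≤ b * l x2 := by linarith
      have := le_of_mul_le_mul_left h3' hb
      linarith
    exact ⟨hx1, k1⟩

/-- points of the hull where a linear bound is tight lie in the hull of tight generators -/
lemma mem_face_hull {S : Set (V → ℝ)} (l : (V → ℝ) →ₗ[ℝ] ℝ) (r : ℝ)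
    (h : ∀ s ∈ S, l s ≤ r) {x : V → ℝ} (hx : x ∈ convexHull ℝ S) (hxr : l x = r) :
    x ∈ convexHull ℝ {s ∈ S | l s = r} := by
  rw [convexHull_eq] at hx
  obtain ⟨ι, t, w, z, hw, hw1, hz, hcm⟩ := hx
  have hxs : x = ∑ i ∈ t, w i • z i := by
    rw [← hcm, Finset.centerMass, hw1, inv_one, one_smul]
  have hlx : ∑ i ∈ t, w i * l (z i) = r := by
    rw [← hxr, hxs]; simp [map_sum]
  have hzero : ∑ i ∈ t, w i * (r - l (z i)) = 0 := by
    simp only [mul_sub]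
    rw [Finset.sum_sub_distrib, hlx, ← Finset.sum_mul, hw1, one_mul, sub_self]
  have hterm : ∀ i ∈ t, w i * (r - l (z i)) = 0 :=
    (Finset.sum_eq_zero_iff_of_nonneg
      (fun i hi => mul_nonneg (hw i hi) (sub_nonneg.2 (h _ (hz i hi))))).1 hzero
  set t' := t.filter (fun i => w i ≠ 0) with ht'
  have hsum' : ∑ i ∈ t', w i = 1 := by
    rw [ht', Finset.sum_filter_ne_zero, hw1]
  have hcm' : t'.centerMass w z = x := by
    rw [ht', Finset.centerMass_filter_ne_zero, hcm]
  rw [← hcm']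
  apply Finset.centerMass_mem_convexHull
  · exact fun i hi => hw i (Finset.mem_filter.1 hi).1
  · rw [hsum']; norm_num
  · intro i hi
    obtain ⟨hit, hwi⟩ := Finset.mem_filter.1 hi
    refine ⟨hz i hit, ?_⟩
    have := hterm i hit
    rcases mul_eq_zero.1 this with h' | h'
    · exact absurd h' hwi
    · linarith [sub_eq_zero.1 h']


lemma chi_mem_poly {G : SimpleGraph V} {S : Set V} (h : chi S ∈ polyVerts G) :
    chi S ∈ poly G := subset_convexHull ℝ _ h

lemma zero_mem_poly (G : SimpleGraph V) : chi (∅ : Set V) ∈ poly G :=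
  chi_mem_poly (Or.inl rfl)

lemma single_mem_poly (G : SimpleGraph V) (u : V) : chi ({u} : Set V) ∈ poly G :=
  chi_mem_poly (Or.inr (Or.inl ⟨u, rfl⟩))

lemma chi_mem_Icc (S : Set V) (w : V) : chi S w ∈ Icc (0:ℝ) 1 := by
  by_cases h : w ∈ S
  · rw [show chi S w = 1 from Set.indicator_of_mem h _]; norm_num
  · rw [show chi S w = 0 from Set.indicator_of_notMem h _]; norm_num

lemma poly_coords {G : SimpleGraph V} {x : V → ℝ} (hx : x ∈ poly G) (w : V) :
    x w ∈ Icc (0:ℝ) 1 := by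
  have hsub : poly G ⊆ Set.pi univ (fun _ : V => Icc (0:ℝ) 1) := by
    apply convexHull_min _ (convex_pi fun _ _ => convex_Icc 0 1)
    rintro y (rfl | ⟨v, rfl⟩ | ⟨a, b, hab, rfl⟩) <;> exact fun i _ => chi_mem_Icc _ i
  exact hsub hx w (mem_univ w)

lemma seg_zero_single_face [Fintype V] (G : SimpleGraph V) (u : V) :
    IsExtreme ℝ (poly G) (segment ℝ (chi (∅ : Set V)) (chi ({u} : Set V))) := by
  classical
  set c : V → ℝ := fun w => if w = u then 0 else -1 with hc
  have hb : ∀ x ∈ poly G, lfun c x ≤ 0 := by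
    apply lfun_le_on_poly G c 0 le_rfl
    · intro v; by_cases h : v = u <;> simp [hc, h]
    · intro a b _
      have h1 : c a ≤ 0 := by by_cases h : a = u <;> simp [hc, h]
      have h2 : c b ≤ 0 := by by_cases h : b = u <;> simp [hc, h]
      linarith
  have heq : segment ℝ (chi (∅ : Set V)) (chi ({u} : Set V))
      = {x ∈ poly G | lfun c x = 0} := by
    ext x
    constructor
    · rintro ⟨a, b, ha, hb', hab, rfl⟩
      refine ⟨(convex_convexHull ℝ _).segment_subset (zero_mem_poly G)
        (single_mem_poly G u) ⟨a, b, ha, hb', hab, rfl⟩, ?_⟩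
      rw [map_add, map_smul, map_smul, chi_empty, lfun_zero_apply, lfun_chi_single]
      simp [hc]
    · rintro ⟨hxP, hxl⟩
      have hco : ∀ w, x w ∈ Icc (0:ℝ) 1 := poly_coords hxP
      have hterm : ∀ w ∈ Finset.univ, c w * x w = 0 := by
        rw [← Finset.sum_eq_zero_iff_of_nonpos]
        · exact hxl
        · intro w _
          by_cases h : w = u
          · simp [hc, h]
          · simp only [hc, if_neg h]
            have := (hco w).1
            nlinarith
      have hzero : ∀ w, w ≠ u → x w = 0 := by
        intro w hw
        have := hterm w (Finset.mem_univ w)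
        rw [hc] at this
        simp only [if_neg hw] at this
        linarith
      refine ⟨1 - x u, x u, by linarith [(hco u).2], (hco u).1, by ring, ?_⟩
      funext w
      simp only [Pi.add_apply, Pi.smul_apply, smul_eq_mul, chi_empty, Pi.zero_apply]
      by_cases h : w = u
      · subst h; rw [chi_single_self]; ring
      · rw [chi_single_ne h, hzero w h]; ring
  rw [heq]
  exact face_extreme (lfun c) 0 hb

lemma single_extremePoint [Fintype V] (G : SimpleGraph V) (u : V) :
    chi ({u} : Set V) ∈ (poly G).extremePoints ℝ := by
  classical
  rw [← isExtreme_singleton]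
  set c : V → ℝ := fun w => if w = u then 1 else -2 with hc
  have hcv : ∀ v : V, c v ≤ 1 := by
    intro v; by_cases h : v = u <;> simp [hc, h]; norm_num
  have hpair : ∀ a b : V, G.Adj a b → c a + c b ≤ -1 := by
    intro a b hab
    by_cases ha : a = u
    · have hbu : b ≠ u := fun h => hab.ne (ha.trans h.symm)
      have h1 : c a = 1 := by simp only [hc]; rw [if_pos ha]
      have h2 : c b = -2 := by simp only [hc]; rw [if_neg hbu]
      linarith
    · have := hcv b
      simp only [hc, if_neg ha] at *
      linarith
  have hb : ∀ x ∈ poly G, lfun c x ≤ 1 :=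
    lfun_le_on_poly G c 1 zero_le_one hcv
      (fun a b hab => by linarith [hpair a b hab])
  have heq : ({chi ({u} : Set V)} : Set (V → ℝ)) = {x ∈ poly G | lfun c x = 1} := by
    apply Subset.antisymm
    · rintro x rfl
      refine ⟨single_mem_poly G u, ?_⟩
      rw [lfun_chi_single]; simp [hc]
    · rintro x ⟨hxP, hxl⟩
      have := mem_face_hull (lfun c) 1 (by
        rintro s (rfl | ⟨v, rfl⟩ | ⟨a, b, hab, rfl⟩)
        · rw [chi_empty, lfun_zero_apply]; norm_num
        · rw [lfun_chi_single]; exact hcv v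
        · rw [chi_pair_eq hab.ne, map_add, lfun_chi_single, lfun_chi_single]
          linarith [hpair a b hab]) hxP hxl
      have hsub : {s ∈ polyVerts G | lfun c s = 1} ⊆ ({chi ({u} : Set V)} : Set (V → ℝ)) := by
        rintro s ⟨(rfl | ⟨v, rfl⟩ | ⟨a, b, hab, rfl⟩), hs⟩
        · rw [chi_empty, lfun_zero_apply] at hs; norm_num at hs
        · rw [lfun_chi_single] at hs
          by_cases h : v = u
          · subst h; rfl
          · simp only [hc, if_neg h] at hs; norm_num at hs
        · rw [chi_pair_eq hab.ne, map_add, lfun_chi_single, lfun_chi_single] at hs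
          linarith [hpair a b hab]
      have := convexHull_mono hsub this
      rwa [convexHull_singleton] at this
  rw [heq]
  exact face_extreme (lfun c) 1 hb

lemma seg_pair_face [Fintype V] (G : SimpleGraph V) {u v : V} (hne : u ≠ v)
    (hnadj : ¬ G.Adj u v) :
    IsExtreme ℝ (poly G) (segment ℝ (chi ({u} : Set V)) (chi ({v} : Set V))) := by
  classical
  set c : V → ℝ := fun w => if w = u ∨ w = v then 1 else -2 with hc
  have hcv : ∀ w : V, c w ≤ 1 := by
    intro w; by_cases h : w = u ∨ w = v <;> simp [hc, h]; norm_num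
  have hpair : ∀ a b : V, G.Adj a b → c a + c b ≤ -1 := by
    intro a b hab
    by_cases ha : a = u ∨ a = v
    · have hbn : ¬ (b = u ∨ b = v) := by
        rintro (rfl | rfl) <;> rcases ha with rfl | rfl
        · exact hab.ne rfl
        · exact hnadj (hab.symm)
        · exact hnadj hab
        · exact hab.ne rfl
      have h1 : c a = 1 := by simp only [hc]; rw [if_pos ha]
      have h2 : c b = -2 := by simp only [hc]; rw [if_neg hbn]
      linarith
    · have := hcv b
      simp only [hc, if_neg ha] at *
      linarith
  have hb : ∀ x ∈ poly G, lfun c x ≤ 1 :=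
    lfun_le_on_poly G c 1 zero_le_one hcv
      (fun a b hab => by linarith [hpair a b hab])
  have hvert : ∀ s ∈ polyVerts G, lfun c s ≤ 1 := by
    rintro s (rfl | ⟨w, rfl⟩ | ⟨a, b, hab, rfl⟩)
    · rw [chi_empty, lfun_zero_apply]; norm_num
    · rw [lfun_chi_single]; exact hcv w
    · rw [chi_pair_eq hab.ne, map_add, lfun_chi_single, lfun_chi_single]
      linarith [hpair a b hab]
  have heq : segment ℝ (chi ({u} : Set V)) (chi ({v} : Set V))
      = {x ∈ poly G | lfun c x = 1} := by
    apply Subset.antisymm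
    · rintro x ⟨a, b, ha, hb', hab, rfl⟩
      refine ⟨(convex_convexHull ℝ _).segment_subset (single_mem_poly G u)
        (single_mem_poly G v) ⟨a, b, ha, hb', hab, rfl⟩, ?_⟩
      rw [map_add, map_smul, map_smul, lfun_chi_single, lfun_chi_single]
      simp only [hc, if_pos (Or.inl rfl), if_pos (Or.inr rfl), smul_eq_mul]
      linarith
    · rintro x ⟨hxP, hxl⟩
      have hmem := mem_face_hull (lfun c) 1 hvert hxP hxl
      have hsub : {s ∈ polyVerts G | lfun c s = 1}
          ⊆ ({chi ({u} : Set V), chi ({v} : Set V)} : Set (V → ℝ)) := by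
        rintro s ⟨(rfl | ⟨w, rfl⟩ | ⟨a, b, hab, rfl⟩), hs⟩
        · rw [chi_empty, lfun_zero_apply] at hs; norm_num at hs
        · rw [lfun_chi_single] at hs
          by_cases h : w = u ∨ w = v
          · rcases h with rfl | rfl
            · exact Or.inl rfl
            · exact Or.inr rfl
          · simp only [hc, if_neg h] at hs; norm_num at hs
        · rw [chi_pair_eq hab.ne, map_add, lfun_chi_single, lfun_chi_single] at hs
          linarith [hpair a b hab]
      have := convexHull_mono hsub hmem
      rwa [convexHull_pair] at this
  rw [heq]
  exact face_extreme (lfun c) 1 hb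

lemma not_adjVert_of_adj [Fintype V] (G : SimpleGraph V) {u v : V} (hadj : G.Adj u v) :
    ¬ AdjVert (poly G) (chi ({u} : Set V)) (chi ({v} : Set V)) := by
  rintro ⟨hne, hseg, hext⟩
  have hx : ((1:ℝ)/2) • chi ({u} : Set V) + ((1:ℝ)/2) • chi ({v} : Set V)
      ∈ segment ℝ (chi ({u} : Set V)) (chi ({v} : Set V)) :=
    ⟨1/2, 1/2, by norm_num, by norm_num, by norm_num, rfl⟩
  have hopen : ((1:ℝ)/2) • chi ({u} : Set V) + ((1:ℝ)/2) • chi ({v} : Set V)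
      ∈ openSegment ℝ (chi (∅ : Set V)) (chi ({u, v} : Set V)) := by
    refine ⟨1/2, 1/2, by norm_num, by norm_num, by norm_num, ?_⟩
    rw [chi_empty, smul_zero, zero_add, chi_pair_eq hadj.ne, smul_add]
  have h0 := hext (zero_mem_poly G)
    (chi_mem_poly (Or.inr (Or.inr ⟨u, v, hadj, rfl⟩))) hx hopen
  obtain ⟨a, b, ha, hb, hab, heq⟩ := h0
  rw [chi_empty] at heq
  have hu := congrFun heq u
  have hv := congrFun heq v
  simp only [Pi.add_apply, Pi.smul_apply, smul_eq_mul, Pi.zero_apply, chi_single_self,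
    chi_single_ne hadj.ne, chi_single_ne (Ne.symm hadj.ne), mul_one, mul_zero,
    add_zero, zero_add] at hu hv
  -- hu : a = 0, hv : b = 0
  linarith

lemma not_adjVert_zero_pair [Fintype V] (G : SimpleGraph V) {a b : V} (hadj : G.Adj a b) :
    ¬ AdjVert (poly G) (chi (∅ : Set V)) (chi ({a, b} : Set V)) := by
  rintro ⟨hne, hseg, hext⟩
  have hx : ((1:ℝ)/2) • chi ({a, b} : Set V)
      ∈ segment ℝ (chi (∅ : Set V)) (chi ({a, b} : Set V)) := by
    refine ⟨1/2, 1/2, by norm_num, by norm_num, by norm_num, ?_⟩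
    rw [chi_empty, smul_zero, zero_add]
  have hopen : ((1:ℝ)/2) • chi ({a, b} : Set V)
      ∈ openSegment ℝ (chi ({a} : Set V)) (chi ({b} : Set V)) := by
    refine ⟨1/2, 1/2, by norm_num, by norm_num, by norm_num, ?_⟩
    rw [chi_pair_eq hadj.ne, smul_add]
  have h0 := hext (single_mem_poly G a) (single_mem_poly G b) hx hopen
  obtain ⟨s, t, hs, ht, hst, heq⟩ := h0
  have hpa : chi ({a, b} : Set V) a = 1 :=
    Set.indicator_of_mem (Set.mem_insert a {b}) _
  have hpb : chi ({a, b} : Set V) b = 1 :=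
    Set.indicator_of_mem (show b ∈ ({a, b} : Set V) by right; rfl) _
  rw [chi_empty, smul_zero, zero_add] at heq
  have ha' := congrFun heq a
  have hb' := congrFun heq b
  rw [Pi.smul_apply, smul_eq_mul, hpa, chi_single_self] at ha'
  rw [Pi.smul_apply, smul_eq_mul, hpb, chi_single_ne (Ne.symm hadj.ne)] at hb'
  -- ha' : t * 1 = 1, hb' : t * 1 = 0
  rw [mul_one] at ha' hb'
  rw [ha'] at hb'; norm_num at hb' 

theorem stmt10 [Fintype V] [Nonempty V] (G : SimpleGraph V) :
    {q | q ∈ (poly G).extremePoints ℝ ∧ AdjVert (poly G) (chi (∅ : Set V)) q} =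
      {x | ∃ u : V, x = chi ({u} : Set V)} ∧
    Function.Injective (fun u : V => chi ({u} : Set V)) ∧
    (∀ u v : V,
      Gᶜ.Adj u v ↔ AdjVert (poly G) (chi ({u} : Set V)) (chi ({v} : Set V))) := by
  have hchine : ∀ u : V, chi (∅ : Set V) ≠ chi ({u} : Set V) := by
    intro u h
    have := congrFun h u
    rw [chi_empty, Pi.zero_apply, chi_single_self] at this
    norm_num at this
  refine ⟨?_, chi_inj, ?_⟩
  · ext q
    simp only [mem_setOf_eq]
    constructor
    · rintro ⟨hq, hAdj⟩
      have hq' : q ∈ polyVerts G := extremePoints_convexHull_subset hq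
      rcases hq' with rfl | ⟨v, rfl⟩ | ⟨a, b, hab, rfl⟩
      · exact absurd rfl hAdj.1
      · exact ⟨v, rfl⟩
      · exact absurd hAdj (not_adjVert_zero_pair G hab)
    · rintro ⟨u, rfl⟩
      exact ⟨single_extremePoint G u, hchine u, seg_zero_single_face G u⟩
  · intro u v
    rw [SimpleGraph.compl_adj]
    constructor
    · rintro ⟨hne, hnadj⟩
      exact ⟨fun h => hne (chi_inj h), seg_pair_face G hne hnadj⟩
    · intro hAdj
      constructor
      · rintro rfl; exact hAdj.1 rfl
      · intro h; exact not_adjVert_of_adj G h hAdj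
end
end
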